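/- Bernstein's inequality on the torus (one direction, L^∞ case): if f : 𝕋³ → ℂ is a trigonometric polynomial whose Fourier coefficients are supported in the annulus {k ∈ ℤ³ : 2^{q-1} ≤ |k| ≤ 2^{q+1}}, then for every multi-index α, ‖∂^α f‖_{L^∞} ≤ C_{|α|} · 2^{q|α|} · ‖f‖_{L^∞}, with constant depending only on |α| (and dimension). -/

import Mathlib

open Complex Finset

noncomputable def Efn (m : ℤ) (u : ℝ) : ℂ := Complex.exp (Complex.I * m * u)

lemma Efn_norm (m : ℤ) (u : ℝ) : ‖Efn m u‖ = 1 := by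
  rw [Efn, Complex.norm_exp]
  simp

lemma Efn_mul (m m' : ℤ) (u : ℝ) : Efn m u * Efn m' u = Efn (m + m') u := by
  rw [Efn, Efn, Efn, ← Complex.exp_add]
  congr 1
  push_cast
  ring

lemma Efn_conj (m : ℤ) (u : ℝ) : (starRingEnd ℂ) (Efn m u) = Efn (-m) u := by
  rw [Efn, Efn, ← Complex.exp_conj]
  congr 1
  simp

lemma Efn_sub (m : ℤ) (u v : ℝ) : Efn m (u - v) = Efn m u * Efn (-m) v := by
  rw [Efn, Efn, Efn, ← Complex.exp_add]
  congr 1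
  push_cast
  ring

lemma Efn_zero (u : ℝ) : Efn 0 u = 1 := by simp [Efn]

lemma orth_exp (L : ℕ) (hL : 0 < L) (m : ℤ) (hm : |m| < (L:ℤ)) :
    ∑ l ∈ range L, Efn m (2 * Real.pi * l / L) =
      if m = 0 then (L : ℂ) else 0 := by
  have hstep : ∀ l : ℕ, Efn m (2 * Real.pi * l / L)
      = Complex.exp (I * m * (2 * Real.pi) / L) ^ l := by
    intro l
    rw [Efn, ← Complex.exp_nat_mul]
    congr 1
    have hL' : (L:ℂ) ≠ 0 := Nat.cast_ne_zero.2 hL.ne'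
    push_cast
    field_simp
  simp_rw [hstep]
  by_cases hm0 : m = 0
  · simp [hm0]
  · rw [if_neg hm0]
    have hζ : Complex.exp (I * m * (2 * Real.pi) / L) ≠ 1 := by
      intro h
      rw [Complex.exp_eq_one_iff] at h
      obtain ⟨n, hn⟩ := h
      have hL' : (L:ℂ) ≠ 0 := Nat.cast_ne_zero.2 hL.ne'
      have h2 : (m : ℂ) * (I * 2 * Real.pi) = ((n * L : ℤ) : ℂ) * (I * 2 * Real.pi) := by
        field_simp at hn
        push_cast
        linear_combination (I * 2 * Real.pi) * hn
      have h3 : (m : ℂ) = ((n * L : ℤ) : ℂ) :=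
        mul_right_cancel₀ (mul_ne_zero (mul_ne_zero I_ne_zero two_ne_zero)
          (by exact_mod_cast Real.pi_ne_zero)) h2
      have h4 : m = n * L := by exact_mod_cast h3
      have h5 : (L:ℤ) ∣ |m| := (dvd_abs _ _).2 ⟨n, by linarith⟩
      have h6 : (L:ℤ) ≤ |m| := Int.le_of_dvd (abs_pos.mpr hm0) h5
      linarith
    rw [geom_sum_eq hζ]
    have : Complex.exp (I * m * (2 * Real.pi) / L) ^ L = 1 := by
      rw [← Complex.exp_nat_mul]
      have hL' : (L:ℂ) ≠ 0 := Nat.cast_ne_zero.2 hL.ne'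
      have : (L:ℂ) * (I * m * (2 * Real.pi) / L) = m * (2 * Real.pi * I) := by
        field_simp
      rw [this, Complex.exp_int_mul_two_pi_mul_I]
    rw [this]
    simp

lemma count_lemma (N : ℕ) (j : ℤ) (hj : |j| ≤ (N:ℤ)) :
    ∑ a ∈ Finset.Ico (0:ℤ) (N:ℤ), ∑ b ∈ Finset.Ico (0:ℤ) (N:ℤ),
      ((if (N:ℤ) + a - b - j = 0 then (1:ℤ) else 0)
        - (if a - b - (N:ℤ) - j = 0 then 1 else 0)) = j := by
  have e1 : ∀ a : ℤ, ∑ b ∈ Finset.Ico (0:ℤ) (N:ℤ), (if (N:ℤ) + a - b - j = 0 then (1:ℤ) else 0)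
      = if a ∈ Finset.Ico (j - N) j then 1 else 0 := by
    intro a
    rw [show (∑ b ∈ Finset.Ico (0:ℤ) (N:ℤ), (if (N:ℤ) + a - b - j = 0 then (1:ℤ) else 0))
        = ∑ b ∈ Finset.Ico (0:ℤ) (N:ℤ), (if b = (N:ℤ) + a - j then (1:ℤ) else 0) from
      Finset.sum_congr rfl fun b _ => if_congr (by omega) rfl rfl]
    rw [Finset.sum_ite_eq' (Finset.Ico (0:ℤ) (N:ℤ)) ((N:ℤ) + a - j) (fun _ => (1:ℤ))]
    exact if_congr (by simp only [Finset.mem_Ico]; omega) rfl rfl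
  have e2 : ∀ a : ℤ, ∑ b ∈ Finset.Ico (0:ℤ) (N:ℤ), (if a - b - (N:ℤ) - j = 0 then (1:ℤ) else 0)
      = if a ∈ Finset.Ico ((N:ℤ) + j) (2 * N + j) then 1 else 0 := by
    intro a
    rw [show (∑ b ∈ Finset.Ico (0:ℤ) (N:ℤ), (if a - b - (N:ℤ) - j = 0 then (1:ℤ) else 0))
        = ∑ b ∈ Finset.Ico (0:ℤ) (N:ℤ), (if b = a - N - j then (1:ℤ) else 0) from
      Finset.sum_congr rfl fun b _ => if_congr (by omega) rfl rfl]
    rw [Finset.sum_ite_eq' (Finset.Ico (0:ℤ) (N:ℤ)) (a - N - j) (fun _ => (1:ℤ))]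
    exact if_congr (by simp only [Finset.mem_Ico]; omega) rfl rfl
  simp_rw [Finset.sum_sub_distrib, e1, e2, Finset.sum_ite_mem, Finset.sum_const,
    Finset.Ico_inter_Ico, nsmul_eq_mul, mul_one, Int.card_Ico]
  rcases abs_le.1 hj with ⟨h1, h2⟩
  rw [min_eq_right (by omega), min_eq_left (by omega), max_eq_left (by omega),
    max_eq_right (by omega)]
  omega

lemma bern1 {ι : Type*} (S : Finset ι) (N : ℕ) (j : ι → ℤ) (hj : ∀ i ∈ S, |j i| ≤ (N:ℤ))
    (b : ι → ℂ) (M : ℝ)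
    (hM : ∀ t : ℝ, ‖∑ i ∈ S, b i * Efn (j i) t‖ ≤ M) (t : ℝ) :
    ‖∑ i ∈ S, b i * (I * (j i)) * Efn (j i) t‖ ≤ 2 * N * M := by
  classical
  set L : ℕ := 4 * N + 1 with hLdef
  have hL : 0 < L := by omega
  set y : ℕ → ℝ := fun l => 2 * Real.pi * l / L with hy
  set A : Finset ℤ := Finset.Ico (0:ℤ) (N:ℤ) with hA
  set Q : ℝ → ℂ := fun u => ∑ a ∈ A, ∑ c ∈ A,
    (I * (Efn ((N:ℤ) + a - c) u - Efn (a - c - (N:ℤ)) u)) with hQ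
  set D : ℝ → ℂ := fun u => ∑ a ∈ A, Efn a u with hD
  have hLne : (L:ℂ) ≠ 0 := Nat.cast_ne_zero.2 hL.ne'
  have hLneR : (L:ℝ) ≠ 0 := Nat.cast_ne_zero.2 hL.ne'
  have expand : ∀ u : ℝ, D u * (starRingEnd ℂ) (D u) = ∑ a ∈ A, ∑ c ∈ A, Efn (a - c) u := by
    intro u
    rw [hD]
    simp only [map_sum]
    rw [Finset.sum_mul_sum]
    refine Finset.sum_congr rfl fun a _ => Finset.sum_congr rfl fun c _ => ?_
    rw [Efn_conj, Efn_mul, show a + -c = a - c from by ring]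
  -- (K3) pointwise bound
  have K3 : ∀ u : ℝ, ‖Q u‖ ≤ 2 * Complex.normSq (D u) := by
    intro u
    have hfact : Q u = I * (Efn (N:ℤ) u - Efn (-(N:ℤ)) u) * (D u * (starRingEnd ℂ) (D u)) := by
      rw [expand, hQ]
      simp only [Finset.mul_sum]
      refine Finset.sum_congr rfl fun a _ => Finset.sum_congr rfl fun c _ => ?_
      rw [show I * (Efn (N:ℤ) u - Efn (-(N:ℤ)) u) * Efn (a - c) u
          = I * ((Efn (N:ℤ) u * Efn (a - c) u) - (Efn (-(N:ℤ)) u * Efn (a - c) u)) from by ring,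
        Efn_mul, Efn_mul, show (N:ℤ) + (a - c) = (N:ℤ) + a - c from by ring,
        show -(N:ℤ) + (a - c) = a - c - (N:ℤ) from by ring]
    rw [hfact, Complex.mul_conj, norm_mul, norm_mul]
    have h1 : ‖(I:ℂ)‖ = 1 := by simp
    have h2 : ‖Efn (N:ℤ) u - Efn (-(N:ℤ)) u‖ ≤ 2 := by
      calc ‖Efn (N:ℤ) u - Efn (-(N:ℤ)) u‖ ≤ ‖Efn (N:ℤ) u‖ + ‖Efn (-(N:ℤ)) u‖ := norm_sub_le _ _
        _ = 2 := by rw [Efn_norm, Efn_norm]; norm_num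
    have h3 : ‖((Complex.normSq (D u) : ℝ) : ℂ)‖ = Complex.normSq (D u) := by
      rw [Complex.norm_real, Real.norm_eq_abs, _root_.abs_of_nonneg (Complex.normSq_nonneg _)]
    rw [h1, h3, one_mul]
    exact mul_le_mul_of_nonneg_right h2 (Complex.normSq_nonneg _)
  -- (K4) mass
  have K4 : ∑ l ∈ range L, Complex.normSq (D (y l)) = (N : ℝ) * L := by
    have hC : ∑ l ∈ range L, ((Complex.normSq (D (y l)) : ℝ) : ℂ) = ((N:ℕ) : ℂ) * (L : ℂ) := by
      have hterm : ∀ l, ((Complex.normSq (D (y l)) : ℝ) : ℂ) = ∑ a ∈ A, ∑ c ∈ A, Efn (a - c) (y l) := by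
        intro l
        rw [← Complex.mul_conj, expand]
      simp_rw [hterm]
      rw [Finset.sum_comm]
      have inner : ∀ a ∈ A, ∑ l ∈ range L, ∑ c ∈ A, Efn (a - c) (y l) = (L : ℂ) := by
        intro a ha
        rw [hA, Finset.mem_Ico] at ha
        rw [Finset.sum_comm]
        have step1 : ∀ c ∈ A, ∑ l ∈ range L, Efn (a - c) (y l) = if a - c = 0 then (L:ℂ) else 0 := by
          intro c hc
          rw [hA, Finset.mem_Ico] at hc
          simp only [hy]
          exact orth_exp L hL (a - c) (abs_lt.2 ⟨by omega, by omega⟩)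
        rw [Finset.sum_congr rfl step1]
        rw [show (∑ c ∈ A, if a - c = 0 then (L:ℂ) else 0)
            = ∑ c ∈ A, if c = a then (L:ℂ) else 0 from
          Finset.sum_congr rfl fun c _ => if_congr (by omega) rfl rfl]
        rw [Finset.sum_ite_eq' A a (fun _ => (L:ℂ))]
        rw [if_pos (by rw [hA, Finset.mem_Ico]; omega)]
      rw [Finset.sum_congr rfl inner, Finset.sum_const, hA, nsmul_eq_mul]
      congr 1
      simp
    rw [show ((N:ℕ) : ℂ) * (L:ℂ) = (((N:ℝ) * (L:ℝ) : ℝ) : ℂ) from by push_cast; ring] at hC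
    rw [← Complex.ofReal_sum] at hC
    exact_mod_cast hC
  -- (K1) coefficient identity
  have K1 : ∀ i ∈ S, ∑ l ∈ range L, Efn (-(j i)) (y l) * Q (y l) = I * (j i) * L := by
    intro i hi
    have hji := hj i hi
    have hterm : ∀ l, Efn (-(j i)) (y l) * Q (y l)
        = ∑ a ∈ A, ∑ c ∈ A, (I * (Efn ((N:ℤ) + a - c - j i) (y l) - Efn (a - c - (N:ℤ) - j i) (y l))) := by
      intro l
      rw [hQ]
      simp only [Finset.mul_sum]
      refine Finset.sum_congr rfl fun a _ => Finset.sum_congr rfl fun c _ => ?_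
      rw [show Efn (-(j i)) (y l) * (I * (Efn ((N:ℤ) + a - c) (y l) - Efn (a - c - (N:ℤ)) (y l)))
          = I * ((Efn (-(j i)) (y l) * Efn ((N:ℤ) + a - c) (y l))
            - (Efn (-(j i)) (y l) * Efn (a - c - (N:ℤ)) (y l))) from by ring,
        Efn_mul, Efn_mul,
        show -(j i) + ((N:ℤ) + a - c) = (N:ℤ) + a - c - j i from by ring,
        show -(j i) + (a - c - (N:ℤ)) = a - c - (N:ℤ) - j i from by ring]
    have main : ∀ a ∈ A, ∀ c ∈ A,
        ∑ l ∈ range L, (I * (Efn ((N:ℤ) + a - c - j i) (y l) - Efn (a - c - (N:ℤ) - j i) (y l)))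
        = I * (L:ℂ) * ((((if (N:ℤ) + a - c - j i = 0 then (1:ℤ) else 0)
            - (if a - c - (N:ℤ) - j i = 0 then 1 else 0)) : ℤ) : ℂ) := by
      intro a ha c hc
      rw [hA, Finset.mem_Ico] at ha hc
      obtain ⟨hj1, hj2⟩ := abs_le.1 hji
      rw [← Finset.mul_sum, Finset.sum_sub_distrib]
      simp only [hy]
      rw [orth_exp L hL _ (abs_lt.2 ⟨by omega, by omega⟩),
        orth_exp L hL _ (abs_lt.2 ⟨by omega, by omega⟩)]
      split_ifs <;> push_cast <;> ring
    calc ∑ l ∈ range L, Efn (-(j i)) (y l) * Q (y l)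
        = ∑ l ∈ range L, ∑ a ∈ A, ∑ c ∈ A,
            (I * (Efn ((N:ℤ) + a - c - j i) (y l) - Efn (a - c - (N:ℤ) - j i) (y l))) :=
          Finset.sum_congr rfl fun l _ => hterm l
      _ = ∑ a ∈ A, ∑ l ∈ range L, ∑ c ∈ A,
            (I * (Efn ((N:ℤ) + a - c - j i) (y l) - Efn (a - c - (N:ℤ) - j i) (y l))) :=
          Finset.sum_comm
      _ = ∑ a ∈ A, ∑ c ∈ A, ∑ l ∈ range L,
            (I * (Efn ((N:ℤ) + a - c - j i) (y l) - Efn (a - c - (N:ℤ) - j i) (y l))) :=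
          Finset.sum_congr rfl fun a _ => Finset.sum_comm
      _ = ∑ a ∈ A, ∑ c ∈ A, I * (L:ℂ) * ((((if (N:ℤ) + a - c - j i = 0 then (1:ℤ) else 0)
            - (if a - c - (N:ℤ) - j i = 0 then 1 else 0)) : ℤ) : ℂ) :=
          Finset.sum_congr rfl fun a ha => Finset.sum_congr rfl fun c hc => main a ha c hc
      _ = I * (L:ℂ) * (((∑ a ∈ A, ∑ c ∈ A, ((if (N:ℤ) + a - c - j i = 0 then (1:ℤ) else 0)
            - (if a - c - (N:ℤ) - j i = 0 then 1 else 0))) : ℤ) : ℂ) := by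
          rw [show (((∑ a ∈ A, ∑ c ∈ A, ((if (N:ℤ) + a - c - j i = 0 then (1:ℤ) else 0)
            - (if a - c - (N:ℤ) - j i = 0 then 1 else 0))) : ℤ) : ℂ)
            = ∑ a ∈ A, ∑ c ∈ A, ((((if (N:ℤ) + a - c - j i = 0 then (1:ℤ) else 0)
            - (if a - c - (N:ℤ) - j i = 0 then 1 else 0)) : ℤ) : ℂ) from by push_cast; rfl]
          rw [Finset.mul_sum]
          exact Finset.sum_congr rfl fun a _ => by rw [Finset.mul_sum]
      _ = I * (j i) * L := by
          rw [hA, count_lemma N (j i) hji]; ring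
  -- (K2) reproducing identity
  have K2 : ∑ i ∈ S, b i * (I * (j i)) * Efn (j i) t
      = (1/(L:ℂ)) * ∑ l ∈ range L, (∑ i ∈ S, b i * Efn (j i) (t - y l)) * Q (y l) := by
    have hmain : ∑ l ∈ range L, (∑ i ∈ S, b i * Efn (j i) (t - y l)) * Q (y l)
        = ∑ i ∈ S, b i * Efn (j i) t * (I * (j i) * L) := by
      calc ∑ l ∈ range L, (∑ i ∈ S, b i * Efn (j i) (t - y l)) * Q (y l)
          = ∑ l ∈ range L, ∑ i ∈ S, b i * Efn (j i) (t - y l) * Q (y l) := by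
            exact Finset.sum_congr rfl fun l _ => Finset.sum_mul _ _ _
        _ = ∑ i ∈ S, ∑ l ∈ range L, b i * Efn (j i) (t - y l) * Q (y l) := Finset.sum_comm
        _ = ∑ i ∈ S, b i * Efn (j i) t * (I * (j i) * L) := by
            refine Finset.sum_congr rfl fun i hi => ?_
            have : ∀ l, b i * Efn (j i) (t - y l) * Q (y l)
                = b i * Efn (j i) t * (Efn (-(j i)) (y l) * Q (y l)) := by
              intro l
              rw [Efn_sub]
              ring
            rw [Finset.sum_congr rfl fun l _ => this l, ← Finset.mul_sum, K1 i hi]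
    rw [hmain, Finset.mul_sum]
    refine Finset.sum_congr rfl fun i hi => ?_
    field_simp
  -- final bound
  have hM0 : 0 ≤ M := le_trans (norm_nonneg _) (hM t)
  rw [K2]
  have step1 : ‖(1/(L:ℂ)) * ∑ l ∈ range L, (∑ i ∈ S, b i * Efn (j i) (t - y l)) * Q (y l)‖
      ≤ (1/(L:ℝ)) * ∑ l ∈ range L, (M * (2 * Complex.normSq (D (y l)))) := by
    rw [norm_mul]
    have h1 : ‖(1/(L:ℂ))‖ = 1/(L:ℝ) := by
      rw [norm_div, norm_one, Complex.norm_natCast]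
    rw [h1]
    refine mul_le_mul_of_nonneg_left ?_ (by positivity)
    refine le_trans (norm_sum_le _ _) (Finset.sum_le_sum fun l _ => ?_)
    rw [norm_mul]
    exact mul_le_mul (hM (t - y l)) (K3 (y l)) (norm_nonneg _) hM0
  refine le_trans step1 ?_
  rw [show (∑ l ∈ range L, (M * (2 * Complex.normSq (D (y l)))))
      = (M * 2) * ∑ l ∈ range L, Complex.normSq (D (y l)) from by
    rw [Finset.mul_sum]; exact Finset.sum_congr rfl fun l _ => by ring]
  rw [K4]
  rw [show (1/(L:ℝ)) * ((M * 2) * ((N:ℝ) * L)) = 2 * N * M * ((L:ℝ)/(L:ℝ)) from by ring]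
  rw [div_self hLneR, mul_one]

lemma bern3 : ∀ (n : ℕ) (α : Fin 3 → ℕ), (∑ m, α m) = n →
    ∀ (N : ℕ) (s : Finset (Fin 3 → ℤ)), (∀ k ∈ s, ∀ m, |k m| ≤ (N:ℤ)) →
    ∀ (c : (Fin 3 → ℤ) → ℂ) (M : ℝ),
    (∀ x : Fin 3 → ℝ, ‖∑ k ∈ s, c k * Complex.exp (I * ((∑ m, (k m : ℝ) * x m : ℝ) : ℂ))‖ ≤ M) →
    ∀ x : Fin 3 → ℝ, ‖∑ k ∈ s, c k * (∏ m, (I * ((k m : ℝ) : ℂ)) ^ (α m)) *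
        Complex.exp (I * ((∑ m, (k m : ℝ) * x m : ℝ) : ℂ))‖ ≤ (2*(N:ℝ))^n * M := by
  intro n
  induction n with
  | zero =>
    intro α hα N s hs c M hM x
    have hα0 : ∀ m, α m = 0 := fun m =>
      Finset.sum_eq_zero_iff.1 hα m (Finset.mem_univ m)
    simp only [hα0, pow_zero, Finset.prod_const_one, mul_one, one_mul]
    exact hM x
  | succ n ih =>
    intro α hα N s hs c M hM x
    have hex : ∃ m₀, 0 < α m₀ := by
      by_contra h
      push_neg at h
      have : ∑ m, α m = 0 := Finset.sum_eq_zero fun m _ => Nat.le_zero.1 (h m)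
      omega
    obtain ⟨m₀, hm₀⟩ := hex
    set α' : Fin 3 → ℕ := Function.update α m₀ (α m₀ - 1) with hα'
    have hsum' : (∑ m, α' m) = n := by
      have h1 := Finset.sum_update_of_mem (Finset.mem_univ m₀) α (α m₀ - 1)
      have h2 : α m₀ + ∑ m ∈ Finset.univ.erase m₀, α m = ∑ m, α m :=
        Finset.add_sum_erase _ _ (Finset.mem_univ m₀)
      rw [← Finset.erase_eq] at h1
      rw [hα']
      omega
    -- auxiliary data for bern1
    set b : (Fin 3 → ℤ) → ℂ := fun k => c k * (∏ m, (I * ((k m : ℝ) : ℂ)) ^ (α' m)) *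
      Complex.exp (I * ((∑ m ∈ Finset.univ.erase m₀, (k m : ℝ) * x m : ℝ) : ℂ)) with hb
    have hsplit : ∀ (k : Fin 3 → ℤ) (t : ℝ),
        (∑ m, (k m : ℝ) * (Function.update x m₀ t) m)
          = (k m₀ : ℝ) * t + ∑ m ∈ Finset.univ.erase m₀, (k m : ℝ) * x m := by
      intro k t
      rw [← Finset.add_sum_erase _ _ (Finset.mem_univ m₀), Function.update_self]
      congr 1
      refine Finset.sum_congr rfl fun m hm => ?_
      rw [Function.update_of_ne (Finset.mem_erase.1 hm).1]
    have hexp : ∀ (k : Fin 3 → ℤ) (t : ℝ),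
        b k * Efn (k m₀) t = c k * (∏ m, (I * ((k m : ℝ) : ℂ)) ^ (α' m)) *
          Complex.exp (I * ((∑ m, (k m : ℝ) * (Function.update x m₀ t) m : ℝ) : ℂ)) := by
      intro k t
      rw [hb, Efn]
      rw [mul_assoc (c k * _), ← Complex.exp_add]
      congr 2
      rw [hsplit k t]
      push_cast
      ring
    have hMg : ∀ t : ℝ, ‖∑ k ∈ s, b k * Efn (k m₀) t‖ ≤ (2*(N:ℝ))^n * M := by
      intro t
      rw [Finset.sum_congr rfl fun k _ => hexp k t]
      exact ih α' hsum' N s hs c M hM (Function.update x m₀ t)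
    have hj : ∀ k ∈ s, |k m₀| ≤ (N:ℤ) := fun k hk => hs k hk m₀
    have key := bern1 s N (fun k => k m₀) hj b ((2*(N:ℝ))^n * M) hMg (x m₀)
    -- identify the conclusion with the target
    have hprod : ∀ k : Fin 3 → ℤ, (∏ m, (I * ((k m : ℝ) : ℂ)) ^ (α m))
        = (∏ m, (I * ((k m : ℝ) : ℂ)) ^ (α' m)) * (I * ((k m₀ : ℝ) : ℂ)) := by
      intro k
      rw [← Finset.prod_erase_mul Finset.univ _ (Finset.mem_univ m₀),
        ← Finset.prod_erase_mul Finset.univ (fun m => (I * ((k m : ℝ) : ℂ)) ^ (α' m))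
          (Finset.mem_univ m₀)]
      have herase : (∏ m ∈ Finset.univ.erase m₀, (I * ((k m : ℝ) : ℂ)) ^ (α m))
          = ∏ m ∈ Finset.univ.erase m₀, (I * ((k m : ℝ) : ℂ)) ^ (α' m) :=
        Finset.prod_congr rfl fun m hm => by
          rw [hα', Function.update_of_ne (Finset.mem_erase.1 hm).1]
      have hp : ∀ z : ℂ, z ^ α m₀ = z ^ (α' m₀) * z := by
        intro z
        rw [hα', Function.update_self]
        conv_lhs => rw [show α m₀ = (α m₀ - 1) + 1 from by omega]
        rw [pow_succ]
      rw [herase, hp]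
      ring
    have hterm : ∀ k : Fin 3 → ℤ,
        c k * (∏ m, (I * ((k m : ℝ) : ℂ)) ^ (α m)) *
          Complex.exp (I * ((∑ m, (k m : ℝ) * x m : ℝ) : ℂ))
        = b k * (I * ((k m₀ : ℤ) : ℂ)) * Efn (k m₀) (x m₀) := by
      intro k
      rw [hb, Efn, hprod k]
      rw [show (∑ m, (k m : ℝ) * x m) = (k m₀ : ℝ) * (x m₀)
          + ∑ m ∈ Finset.univ.erase m₀, (k m : ℝ) * x m from by
        have := hsplit k (x m₀)
        rwa [Function.update_eq_self] at this]
      rw [show (I * ((((k m₀ : ℝ) * (x m₀) + ∑ m ∈ Finset.univ.erase m₀, (k m : ℝ) * x m : ℝ)) : ℂ))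
          = I * ((∑ m ∈ Finset.univ.erase m₀, (k m : ℝ) * x m : ℝ) : ℂ)
            + I * ((k m₀ : ℤ) : ℂ) * ((x m₀ : ℝ) : ℂ) from by push_cast; ring]
      rw [Complex.exp_add]
      push_cast
      ring
    rw [Finset.sum_congr rfl fun k _ => hterm k]
    refine le_trans key ?_
    rw [pow_succ]
    ring_nf
    exact le_refl _

/-- Bernstein's inequality on the torus (`L^∞` case): if `f(x) = ∑_{k ∈ s} c_k e^{ik·x}`
is a trigonometric polynomial with Fourier support in the annulus
`{k : 2^{q-1} ≤ |k| ≤ 2^{q+1}}`, then for every multi-index `α`,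
`‖∂^α f‖_∞ ≤ C_{|α|} 2^{q|α|} ‖f‖_∞`, with constant depending only on `|α|`. -/
theorem bernstein_torus :
    ∃ C : ℕ → ℝ, (∀ n, 0 < C n) ∧
      ∀ (q : ℤ) (s : Finset (Fin 3 → ℤ)),
        (∀ k ∈ s,
          (2 : ℝ) ^ (q - 1) ≤ Real.sqrt (∑ m, ((k m : ℝ)) ^ 2) ∧
          Real.sqrt (∑ m, ((k m : ℝ)) ^ 2) ≤ (2 : ℝ) ^ (q + 1)) →
        ∀ (c : (Fin 3 → ℤ) → ℂ) (α : Fin 3 → ℕ) (M : ℝ),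
          (∀ x : Fin 3 → ℝ,
            ‖∑ k ∈ s, c k * Complex.exp (Complex.I * ((∑ m, (k m : ℝ) * x m : ℝ) : ℂ))‖ ≤ M) →
          ∀ x : Fin 3 → ℝ,
            ‖∑ k ∈ s, c k * (∏ m, (Complex.I * ((k m : ℝ) : ℂ)) ^ (α m)) *
                Complex.exp (Complex.I * ((∑ m, (k m : ℝ) * x m : ℝ) : ℂ))‖
              ≤ C (∑ m, α m) * (2 : ℝ) ^ (q * (∑ m, α m : ℤ)) * M := by
  refine ⟨fun n => (4:ℝ)^n, fun n => by positivity, ?_⟩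
  intro q s hs c α M hM x
  have hM0 : 0 ≤ M := le_trans (norm_nonneg _) (hM x)
  by_cases hq : -1 ≤ q
  · -- main case
    set N : ℕ := 2 ^ (q+1).toNat with hN
    have ht : ((q+1).toNat : ℤ) = q + 1 := Int.toNat_of_nonneg (by omega)
    have hNreal : ((N:ℤ):ℝ) = (2:ℝ)^(q+1) := by
      calc ((N:ℤ):ℝ) = (2:ℝ)^((q+1).toNat) := by rw [hN]; push_cast; norm_num
        _ = (2:ℝ)^(((q+1).toNat : ℤ)) := (zpow_natCast _ _).symm
        _ = (2:ℝ)^(q+1) := by rw [ht]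
    have hNk : ∀ k ∈ s, ∀ m, |k m| ≤ (N:ℤ) := by
      intro k hk m
      have h2 := (hs k hk).2
      have h0 : ((|k m| : ℤ) : ℝ) ≤ Real.sqrt (∑ m', (k m' : ℝ)^2) := by
        rw [Int.cast_abs, ← Real.sqrt_sq_eq_abs]
        exact Real.sqrt_le_sqrt (Finset.single_le_sum
          (f := fun m' => (k m' : ℝ)^2) (fun i _ => sq_nonneg _) (Finset.mem_univ m))
      have : ((|k m| : ℤ) : ℝ) ≤ ((N:ℤ):ℝ) := by
        rw [hNreal]; exact le_trans h0 h2
      exact_mod_cast this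
    have key := bern3 (∑ m, α m) α rfl N s hNk c M hM x
    refine le_trans key (le_of_eq ?_)
    have hconst : (2*(N:ℝ))^(∑ m, α m)
        = (4:ℝ)^(∑ m, α m) * (2:ℝ)^(q * (∑ m, (α m : ℤ))) := by
      have h2N : 2*(N:ℝ) = (2:ℝ)^(q+2) := by
        have hcast : (N:ℝ) = ((N:ℤ):ℝ) := (Int.cast_natCast N).symm
        rw [hcast, hNreal, show q+2 = (q+1)+1 from by ring, zpow_add₀ (two_ne_zero) (q+1) 1]
        ring
      rw [h2N, ← zpow_natCast ((2:ℝ)^(q+2)) (∑ m, α m), ← zpow_mul]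
      have e1 : (q+2) * ((∑ m, α m : ℕ) : ℤ)
          = q * (∑ m, (α m : ℤ)) + 2 * ((∑ m, α m : ℕ) : ℤ) := by
        push_cast
        ring
      rw [e1, zpow_add₀ (two_ne_zero : (2:ℝ) ≠ 0)]
      have e2 : (2:ℝ)^((2:ℤ) * ((∑ m, α m : ℕ) : ℤ)) = (4:ℝ)^(∑ m, α m) := by
        rw [zpow_mul, zpow_natCast]
        norm_num
      rw [e2]
      ring
    rw [hconst]
  · -- degenerate case : s is empty
    have hs0 : s = ∅ := by
      by_contra h
      obtain ⟨k, hk⟩ := Finset.nonempty_iff_ne_empty.2 h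
      obtain ⟨hlow, hhigh⟩ := hs k hk
      have hpos : (0:ℝ) < (2:ℝ)^(q-1) := by positivity
      have hsq : 0 < ∑ m, (k m : ℝ)^2 := by
        by_contra hle
        push_neg at hle
        have h0 : ∑ m, (k m : ℝ)^2 = 0 :=
          le_antisymm hle (Finset.sum_nonneg fun i _ => sq_nonneg _)
        rw [h0, Real.sqrt_zero] at hlow
        linarith
      have hex : ∃ m, k m ≠ 0 := by
        by_contra hall
        push_neg at hall
        simp [hall] at hsq
      obtain ⟨m, hm⟩ := hex
      have h1 : (1:ℝ) ≤ ∑ m', (k m' : ℝ)^2 := by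
        have ha : (1:ℤ) ≤ |k m| := Int.one_le_abs (by omega)
        have hb : (1:ℝ) ≤ (k m : ℝ)^2 := by
          have : (1:ℤ) ≤ (k m)^2 := by nlinarith [_root_.sq_abs (k m)]
          exact_mod_cast this
        exact le_trans hb (Finset.single_le_sum (f := fun m' => ((k m' : ℝ))^2)
          (fun i _ => sq_nonneg _) (Finset.mem_univ m))
      have hsqrt1 : (1:ℝ) ≤ Real.sqrt (∑ m', (k m' : ℝ)^2) := by
        rw [show (1:ℝ) = Real.sqrt 1 from Real.sqrt_one.symm]
        exact Real.sqrt_le_sqrt h1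
      have hsmall : (2:ℝ)^(q+1) < 1 := by
        have h3 : (2:ℝ)^(q+1) ≤ (2:ℝ)^(-1:ℤ) := by
          apply zpow_le_zpow_right₀ (by norm_num : (1:ℝ) ≤ 2)
          omega
        have h4 : (2:ℝ)^(-1:ℤ) < 1 := by
          rw [zpow_neg, zpow_one]
          norm_num
        linarith
      linarith
    rw [hs0]
    simp only [Finset.sum_empty, norm_zero]
    positivity
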